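/- arXiv:2406.18353 — 3 statements merged into one kernel-verified Lean document; each statement's English description precedes it below -/
import Mathlib

section
/- Let j be a positive natural number and let μ be a finite positive Borel measure on ℝ whose support is an infinite set, with μ({0}) = 0. Assume that the (real) polynomials are dense in L²(ℝ, μ) and that the polynomials are also dense in L²(ℝ, x^{2j} dμ(x)). Then the linear span of the monomials {x^n : n ≥ j} is dense in L²(ℝ, μ). -/
open MeasureTheory Polynomial Filter Topology Set

noncomputable section

def msupport (μ : Measure ℝ) : Set ℝ := {x : ℝ | ∀ U ∈ nhds x, μ U ≠ 0}

def PolyDense (μ : Measure ℝ) : Prop :=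
  ∀ f : ℝ → ℝ, MemLp f 2 μ → ∀ ε : ℝ, 0 < ε →
    ∃ p : Polynomial ℝ, eLpNorm (fun x => f x - p.eval x) 2 μ < ENNReal.ofReal ε

/-- Multiplication by `x^j` is an isometry from `L²(x^(2j) dμ)` to `L²(μ)`. -/
lemma eLpNorm_withDensity_pow (j : ℕ) (μ : Measure ℝ) (h : ℝ → ℝ) :
    eLpNorm h 2 (μ.withDensity fun x => ENNReal.ofReal (x ^ (2 * j)))
      = eLpNorm (fun x => h x * x ^ j) 2 μ := by
  rw [eLpNorm_eq_lintegral_rpow_enorm_toReal two_ne_zero ENNReal.ofNat_ne_top,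
    eLpNorm_eq_lintegral_rpow_enorm_toReal two_ne_zero ENNReal.ofNat_ne_top,
    lintegral_withDensity_eq_lintegral_mul_non_measurable _
      (by measurability) (Filter.Eventually.of_forall fun x => ENNReal.ofReal_lt_top)]
  congr 1
  refine lintegral_congr fun x => ?_
  simp only [Pi.mul_apply, ENNReal.toReal_ofNat, ENNReal.rpow_two]
  rw [Real.enorm_eq_ofReal_abs, Real.enorm_eq_ofReal_abs, ← ENNReal.ofReal_pow (abs_nonneg _),
    ← ENNReal.ofReal_pow (abs_nonneg _), ← ENNReal.ofReal_mul ((even_two_mul j).pow_nonneg x)]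
  congr 1
  rw [abs_mul, mul_pow, sq_abs, sq_abs, ← pow_mul, mul_comm j 2]
  ring

/-- **Theorem 1.1.** Let `j ≥ 1` and let `μ` be a finite positive Borel measure on `ℝ` with
infinite support and `μ({0}) = 0`.  If polynomials are dense in `L²(μ)` and in
`L²(x^(2j) dμ)`, then the linear span of the monomials `{x^n : n ≥ j}` (i.e. the polynomials
whose coefficients of degree `< j` all vanish) is dense in `L²(μ)`. -/
theorem algebraic_vs_analytic_main
    (j : ℕ) (hj : 0 < j)
    (μ : Measure ℝ) [IsFiniteMeasure μ]
    (hsupp : (msupport μ).Infinite)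
    (h0 : μ {0} = 0)
    (hdense : PolyDense μ)
    (hdenseW : PolyDense (μ.withDensity fun x => ENNReal.ofReal (x ^ (2 * j)))) :
    ∀ f : ℝ → ℝ, MemLp f 2 μ → ∀ ε : ℝ, 0 < ε →
      ∃ p : Polynomial ℝ, (∀ k < j, p.coeff k = 0) ∧
        eLpNorm (fun x => f x - p.eval x) 2 μ < ENNReal.ofReal ε := by
  intro f hf ε hε
  set ν := μ.withDensity fun x => ENNReal.ofReal (x ^ (2 * j)) with hν
  have hne : ∀ᵐ x ∂μ, x ≠ 0 := by
    rw [ae_iff]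
    simpa using h0
  set g : ℝ → ℝ := fun x => f x / x ^ j with hg
  have hgf : ∀ᵐ x ∂μ, g x * x ^ j = f x := by
    filter_upwards [hne] with x hx
    show f x / x ^ j * x ^ j = f x
    field_simp
  have hgmem : MemLp g 2 ν := by
    have hm : AEStronglyMeasurable g μ := by
      have hge : g = fun x => f x * (x ^ j)⁻¹ := funext fun x => div_eq_mul_inv _ _
      rw [hge]
      exact hf.aestronglyMeasurable.mul
        ((measurable_id.pow_const j).inv).aestronglyMeasurable
    constructor
    · exact hm.mono_ac (withDensity_absolutelyContinuous μ _)
    · rw [eLpNorm_withDensity_pow, eLpNorm_congr_ae hgf]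
      exact hf.2
  obtain ⟨q, hq⟩ := hdenseW g hgmem ε hε
  refine ⟨q * X ^ j, fun k hk => ?_, ?_⟩
  · rw [coeff_mul_X_pow', if_neg (by omega)]
  · have : eLpNorm (fun x => f x - (q * X ^ j).eval x) 2 μ
        = eLpNorm (fun x => g x - q.eval x) 2 ν := by
      rw [eLpNorm_withDensity_pow]
      refine eLpNorm_congr_ae ?_
      filter_upwards [hgf] with x hx
      simp [sub_mul, hx]
    rw [this]
    exact hq
end
end

section
/- Let s ∈ ℕ ∪ {0}, M ∈ ℕ, c ≠ 0 a real number, and let x_1, …, x_M be nonzero real numbers. Define the polynomial t(x) = c·x^s·∏_{i=1}^{M}(1 − x/x_i). Let μ be a finite positive Borel measure on ℝ whose support is an infinite set and which has no mass points at the zeros of t (i.e., μ({z}) = 0 for every real z with t(z) = 0). Assume that polynomials are dense in L²(ℝ, μ) and that polynomials are dense in L²(ℝ, t(x)² dμ(x)). Then the linear span of the functions {x^n t(x) : n ≥ 0} is dense in L²(ℝ, μ). -/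
open MeasureTheory Polynomial Filter Topology Set
open scoped ENNReal NNReal

noncomputable section

/-- **Theorem 2.1 (finitely many factors).** Let `t(x) = c xˢ ∏_{i=1}^M (1 - x/xᵢ)` with
`c ≠ 0` and nonzero `xᵢ`.  Let `μ` be a finite positive measure on `ℝ` with infinite support
and no mass points at the zeros of `t`.  If polynomials are dense in `L²(μ)` and in
`L²(t² dμ)`, then the linear span of `{xⁿ t(x) : n ≥ 0}` (i.e. the set of functions
`q(x) t(x)` with `q` a polynomial) is dense in `L²(μ)`. -/
theorem tdense_finite
    (s M : ℕ) (c : ℝ) (hc : c ≠ 0)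
    (xs : Fin M → ℝ) (hxs : ∀ i, xs i ≠ 0)
    (t : ℝ → ℝ) (ht : ∀ x, t x = c * x ^ s * ∏ i, (1 - x / xs i))
    (μ : Measure ℝ) [IsFiniteMeasure μ]
    (hsupp : (msupport μ).Infinite)
    (hmass : ∀ z : ℝ, t z = 0 → μ {z} = 0)
    (hdense : PolyDense μ)
    (hdenseW : PolyDense (μ.withDensity fun x => ENNReal.ofReal ((t x) ^ 2))) :
    ∀ f : ℝ → ℝ, MemLp f 2 μ → ∀ ε : ℝ, 0 < ε →
      ∃ p : Polynomial ℝ,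
        eLpNorm (fun x => f x - p.eval x * t x) 2 μ < ENNReal.ofReal ε := by
  -- continuity and measurability of `t`
  have htc : Continuous t := by
    have : t = fun x => c * x ^ s * ∏ i, (1 - x / xs i) := funext ht
    rw [this]
    exact (continuous_const.mul (continuous_pow s)).mul
      (continuous_finset_prod _ fun i _ =>
        continuous_const.sub (continuous_id.div_const _))
  have ht_meas : Measurable t := htc.measurable
  set Z : Set ℝ := {x | t x = 0} with hZdef
  have hZc : IsClosed Z := isClosed_eq htc continuous_const
  -- `Z` is finite
  have hZfin : Z.Finite := by
    set T : Polynomial ℝ := C c * X ^ s * ∏ i, (1 - C (xs i)⁻¹ * X) with hTdef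
    have hT0 : T ≠ 0 := by
      refine mul_ne_zero (mul_ne_zero (by simpa using hc) (pow_ne_zero _ X_ne_zero)) ?_
      rw [Finset.prod_ne_zero_iff]
      intro i _ h
      have := congrArg (fun p => Polynomial.coeff p 0) h
      simp at this
    have hTeval : ∀ x, T.eval x = t x := by
      intro x
      rw [ht]
      simp only [hTdef, eval_mul, eval_pow, eval_C, eval_X, eval_prod, eval_sub, eval_one]
      congr 1
      exact Finset.prod_congr rfl fun i _ => by rw [div_eq_mul_inv, mul_comm]
    have : Z = {x | T.IsRoot x} := by
      ext x; simp [hZdef, IsRoot, hTeval]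
    rw [this]
    exact Polynomial.finite_setOf_isRoot hT0
  have hZnull : μ Z = 0 := by
    rw [show Z = ⋃ x ∈ Z, {x} from (Set.biUnion_of_singleton Z).symm,
      measure_biUnion_null_iff hZfin.countable]
    exact fun z hz => hmass z hz
  -- the key isometry between `L²(t² dμ)` and multiplication by `t` in `L²(μ)`
  set ν : Measure ℝ := μ.withDensity fun x => ENNReal.ofReal ((t x) ^ 2) with hνdef
  have key : ∀ h : ℝ → ℝ, Measurable h →
      eLpNorm h 2 ν = eLpNorm (fun x => h x * t x) 2 μ := by
    intro h hmeas
    rw [eLpNorm_eq_lintegral_rpow_enorm_toReal two_ne_zero ENNReal.ofNat_ne_top,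
      eLpNorm_eq_lintegral_rpow_enorm_toReal two_ne_zero ENNReal.ofNat_ne_top]
    congr 1
    have h2 : (2 : ℝ≥0∞).toReal = (2 : ℝ) := by norm_num
    simp only [h2, ENNReal.rpow_two]
    rw [hνdef, lintegral_withDensity_eq_lintegral_mul μ
      (f := fun x => ENNReal.ofReal (t x ^ 2))
      ((ht_meas.pow_const 2).ennreal_ofReal)
      ((hmeas.enorm).pow_const 2)]
    refine lintegral_congr fun x => ?_
    simp only [Pi.mul_apply]
    have h3 : ENNReal.ofReal (t x ^ 2) = ‖t x‖ₑ ^ 2 := by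
      rw [← sq_abs, Real.enorm_eq_ofReal_abs, ← ENNReal.ofReal_pow (abs_nonneg _)]
    rw [h3, enorm_mul, mul_pow]
    ring
  -- Step: approximation of functions vanishing on `Z`
  have step : ∀ g : ℝ → ℝ, Measurable g → MemLp g 2 μ → (∀ x, t x = 0 → g x = 0) →
      ∀ ε' : ℝ, 0 < ε' → ∃ p : Polynomial ℝ,
        eLpNorm (fun x => g x - p.eval x * t x) 2 μ < ENNReal.ofReal ε' := by
    intro g hgmeas hgmem hg0 ε' hε'
    set h : ℝ → ℝ := fun x => g x / t x with hhdef
    have hhmeas : Measurable h := hgmeas.div ht_meas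
    have heq : ∀ x, h x * t x = g x := by
      intro x
      by_cases hx : t x = 0
      · simp [hhdef, hx, hg0 x hx]
      · simp only [hhdef]; field_simp
    have hhmem : MemLp h 2 ν := by
      refine ⟨hhmeas.aestronglyMeasurable, ?_⟩
      rw [key h hhmeas]
      have : (fun x => h x * t x) = g := funext heq
      rw [this]
      exact hgmem.2
    obtain ⟨p, hp⟩ := hdenseW h hhmem ε' hε'
    refine ⟨p, ?_⟩
    have hkey := key (fun x => h x - p.eval x) (hhmeas.sub (p.continuous.measurable))
    have : (fun x => g x - p.eval x * t x) = fun x => (h x - p.eval x) * t x := by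
      funext x; rw [sub_mul, heq]
    rw [this, ← hkey]
    exact hp
  -- Cutoff: approximate continuous compactly supported functions by ones vanishing on `Z`
  have cutoff : ∀ g : ℝ → ℝ, Continuous g → HasCompactSupport g →
      ∀ ε' : ℝ, 0 < ε' → ∃ g' : ℝ → ℝ, Measurable g' ∧ MemLp g' 2 μ ∧
        (∀ x, t x = 0 → g' x = 0) ∧
        eLpNorm (fun x => g x - g' x) 2 μ ≤ ENNReal.ofReal ε' := by
    intro g gcont gsupp ε' hε'
    obtain ⟨C, hC⟩ := gsupp.exists_bound_of_continuous gcont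
    have hC0 : 0 ≤ C := le_trans (norm_nonneg _) (hC 0)
    rcases Z.eq_empty_or_nonempty with hZe | hZne
    · refine ⟨g, gcont.measurable, MemLp.of_bound gcont.measurable.aestronglyMeasurable C
        (Filter.Eventually.of_forall hC), ?_, ?_⟩
      · intro x hx
        exact absurd (show x ∈ Z from hx) (by rw [hZe]; exact notMem_empty x)
      · simp
    · -- choose δ so that the δ-thickening of Z has small measure
      set η : ℝ≥0∞ := (ENNReal.ofReal ε' / ((‖C‖₊ : ℝ≥0∞) + 1)) ^ (2 : ℝ) with hηdef
      have hden_ne_top : ((‖C‖₊ : ℝ≥0∞) + 1) ≠ ⊤ := by simp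
      have hηpos : 0 < η := by
        apply ENNReal.rpow_pos
        · exact ENNReal.div_pos (ENNReal.ofReal_pos.2 hε').ne' hden_ne_top
        · exact (ENNReal.div_lt_top ENNReal.ofReal_ne_top (by simp)).ne
      have htend := tendsto_measure_cthickening (μ := μ) (s := Z)
        ⟨1, one_pos, measure_ne_top μ _⟩
      rw [hZc.closure_eq, hZnull] at htend
      obtain ⟨δ, hδsmall, hδpos⟩ :=
        ((((htend.mono_left (nhdsWithin_le_nhds (s := Set.Ioi (0:ℝ)))).eventually_lt_const hηpos)).and self_mem_nhdsWithin).exists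
      have hδ0 : (0 : ℝ) < δ := hδpos
      set φ : ℝ → ℝ := fun x => max 0 (min 1 (2 / δ * Metric.infDist x Z - 1)) with hφdef
      have φcont : Continuous φ :=
        continuous_const.max (continuous_const.min
          ((continuous_const.mul (Metric.continuous_infDist_pt Z)).sub continuous_const))
      have φ0 : ∀ x, 0 ≤ φ x := fun x => le_max_left _ _
      have φ1 : ∀ x, φ x ≤ 1 := fun x => max_le zero_le_one (min_le_left _ _)
      have φZ : ∀ x ∈ Z, φ x = 0 := by
        intro x hx
        have : Metric.infDist x Z = 0 := Metric.infDist_zero_of_mem hx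
        simp [hφdef, this]
      have φout : ∀ x, x ∉ Metric.cthickening δ Z → φ x = 1 := by
        intro x hx
        have h1 : ENNReal.ofReal δ < EMetric.infEdist x Z := by
          by_contra h
          exact hx (Metric.mem_cthickening_iff.2 (not_lt.1 h))
        have h2 : δ < Metric.infDist x Z := by
          rw [Metric.infDist]
          exact (ENNReal.ofReal_lt_iff_lt_toReal hδ0.le
            (Metric.infEdist_ne_top hZne)).1 h1
        have h3 : (1 : ℝ) ≤ 2 / δ * Metric.infDist x Z - 1 := by
          have h4 : 2 / δ * δ = 2 := by field_simp
          nlinarith [div_pos two_pos hδ0]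
        simp [hφdef, min_eq_left h3, max_eq_right]
      set g' : ℝ → ℝ := fun x => g x * φ x with hg'def
      have hg'meas : Measurable g' := gcont.measurable.mul φcont.measurable
      have hg'bd : ∀ x, ‖g' x‖ ≤ C := by
        intro x
        rw [hg'def]
        calc ‖g x * φ x‖ = ‖g x‖ * |φ x| := by rw [norm_mul]; rfl
          _ ≤ C * 1 := by
              apply mul_le_mul (hC x) _ (abs_nonneg _) hC0
              rw [abs_of_nonneg (φ0 x)]; exact φ1 x
          _ = C := mul_one C
      refine ⟨g', hg'meas, MemLp.of_bound hg'meas.aestronglyMeasurable C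
        (Filter.Eventually.of_forall hg'bd), ?_, ?_⟩
      · intro x hx
        have : φ x = 0 := φZ x hx
        simp [hg'def, this]
      · set E : Set ℝ := Metric.cthickening δ Z with hEdef
        have hEmeas : MeasurableSet E := (Metric.isClosed_cthickening).measurableSet
        have hpt : ∀ x, ‖g x - g' x‖ ≤ ‖E.indicator (fun _ => C) x‖ := by
          intro x
          by_cases hx : x ∈ E
          · rw [Set.indicator_of_mem hx]
            have : g x - g' x = g x * (1 - φ x) := by rw [hg'def]; ring
            rw [this, Real.norm_eq_abs, abs_mul, Real.norm_eq_abs, abs_of_nonneg hC0]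
            calc |g x| * |1 - φ x| ≤ C * 1 := by
                  apply mul_le_mul _ _ (abs_nonneg _) hC0
                  · exact (Real.norm_eq_abs (g x)) ▸ hC x
                  · rw [abs_of_nonneg (by linarith [φ1 x])]
                    linarith [φ0 x]
              _ = C := mul_one C
          · rw [Set.indicator_of_notMem hx]
            have : φ x = 1 := φout x hx
            simp [hg'def, this]
        calc eLpNorm (fun x => g x - g' x) 2 μ
            ≤ eLpNorm (E.indicator (fun _ => C)) 2 μ := eLpNorm_mono hpt
          _ = (‖C‖₊ : ℝ≥0∞) * μ E ^ (1 / (2 : ℝ≥0∞).toReal) :=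
              eLpNorm_indicator_const hEmeas two_ne_zero ENNReal.ofNat_ne_top
          _ ≤ ((‖C‖₊ : ℝ≥0∞) + 1) * (ENNReal.ofReal ε' / ((‖C‖₊ : ℝ≥0∞) + 1)) := by
              apply mul_le_mul' le_self_add
              have h5 : μ E ^ (1 / (2 : ℝ≥0∞).toReal) ≤ η ^ (1 / (2 : ℝ≥0∞).toReal) := by
                apply ENNReal.rpow_le_rpow hδsmall.le
                norm_num
              refine h5.trans_eq ?_
              rw [hηdef, ← ENNReal.rpow_mul]
              norm_num
          _ ≤ ENNReal.ofReal ε' := ENNReal.mul_div_le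
  -- Main argument
  intro f hf ε hε
  have hε3 : (0 : ℝ) < ε / 3 := by linarith
  obtain ⟨g, gsupp, hfg, gcont, gmem⟩ :=
    hf.exists_hasCompactSupport_eLpNorm_sub_le ENNReal.ofNat_ne_top
      (ε := ENNReal.ofReal (ε / 3)) (ENNReal.ofReal_pos.2 hε3).ne'
  obtain ⟨g', hg'meas, hg'mem, hg'0, hgg'⟩ := cutoff g gcont gsupp (ε / 3) hε3
  obtain ⟨p, hp⟩ := step g' hg'meas hg'mem hg'0 (ε / 3) hε3
  refine ⟨p, ?_⟩
  have hsm1 : AEStronglyMeasurable (f - g) μ :=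
    hf.aestronglyMeasurable.sub gcont.measurable.aestronglyMeasurable
  have hsm2 : AEStronglyMeasurable (fun x => g x - g' x) μ :=
    (gcont.measurable.sub hg'meas).aestronglyMeasurable
  have hsm3 : AEStronglyMeasurable (fun x => g' x - p.eval x * t x) μ :=
    (hg'meas.sub ((p.continuous.measurable).mul ht_meas)).aestronglyMeasurable
  have hdecomp : (fun x => f x - p.eval x * t x) =
      (f - g) + ((fun x => g x - g' x) + (fun x => g' x - p.eval x * t x)) := by
    funext x
    simp only [Pi.add_apply, Pi.sub_apply]
    ring
  have htri : eLpNorm (fun x => f x - p.eval x * t x) 2 μ ≤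
      eLpNorm (f - g) 2 μ + (eLpNorm (fun x => g x - g' x) 2 μ +
        eLpNorm (fun x => g' x - p.eval x * t x) 2 μ) := by
    rw [hdecomp]
    calc eLpNorm ((f - g) + ((fun x => g x - g' x) + (fun x => g' x - p.eval x * t x))) 2 μ
        ≤ eLpNorm (f - g) 2 μ +
          eLpNorm ((fun x => g x - g' x) + (fun x => g' x - p.eval x * t x)) 2 μ :=
          eLpNorm_add_le hsm1 (hsm2.add hsm3) one_le_two
      _ ≤ eLpNorm (f - g) 2 μ + (eLpNorm (fun x => g x - g' x) 2 μ +
          eLpNorm (fun x => g' x - p.eval x * t x) 2 μ) := by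
          gcongr
          exact eLpNorm_add_le hsm2 hsm3 one_le_two
  refine htri.trans_lt ?_
  have hsum : ENNReal.ofReal (ε / 3) + (ENNReal.ofReal (ε / 3) + ENNReal.ofReal (ε / 3))
      = ENNReal.ofReal ε := by
    rw [← ENNReal.ofReal_add hε3.le hε3.le, ← ENNReal.ofReal_add hε3.le (by linarith)]
    congr 1
    ring
  calc eLpNorm (f - g) 2 μ + (eLpNorm (fun x => g x - g' x) 2 μ +
        eLpNorm (fun x => g' x - p.eval x * t x) 2 μ)
      < ENNReal.ofReal (ε / 3) + (ENNReal.ofReal (ε / 3) + ENNReal.ofReal (ε / 3)) := by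
        apply ENNReal.add_lt_add_of_le_of_lt (ne_top_of_le_ne_top ENNReal.ofReal_ne_top hfg) hfg
        exact ENNReal.add_lt_add_of_le_of_lt
          (ne_top_of_le_ne_top ENNReal.ofReal_ne_top hgg') hgg' hp
    _ = ENNReal.ofReal ε := hsum
end
end

section
/- Let s ∈ ℕ ∪ {0}, c ≠ 0 a real number, and let (x_j)_{j=1}^{∞} be a sequence of nonzero real numbers with ∑_{j=1}^{∞} 1/|x_j| < ∞. Define t(x) = c·x^s·∏_{j=1}^{∞}(1 − x/x_j) (the infinite product converges absolutely for every real x). Let μ be a finite positive Borel measure on ℝ whose support is an infinite set and which has no mass points at the zeros of t (i.e., μ({z}) = 0 for every real z with t(z) = 0). Assume that polynomials are dense in L²(ℝ, μ) and that t is square-integrable enough that polynomials are dense in L²(ℝ, t(x)² dμ(x)). Then the linear span of the functions {x^n t(x) : n ≥ 0} is dense in L²(ℝ, μ). -/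
open MeasureTheory Polynomial Filter Topology Set
open scoped ENNReal NNReal

noncomputable section
set_option maxHeartbeats 1000000

/-- Key convergence/nonvanishing fact for the genus-zero product. -/
lemma aux_key (xs : ℕ → ℝ) (hsum : Summable fun j => 1 / |xs j|) (x : ℝ) :
    Multipliable (fun j => 1 - x / xs j) ∧
      ((∀ j, 1 - x / xs j ≠ 0) → (∏' j, (1 - x / xs j)) ≠ 0) := by
  have hs : Summable (fun j => |x / xs j|) := by
    refine (hsum.mul_left |x|).congr fun j => ?_
    rw [abs_div]; ring
  have hev : ∀ᶠ j in atTop, |x / xs j| < 1/2 :=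
    hs.tendsto_atTop_zero.eventually (gt_mem_nhds (by norm_num))
  rw [← Nat.cofinite_eq_atTop] at hev
  have hS : {j : ℕ | ¬ |x / xs j| < 1/2}.Finite := eventually_cofinite.mp hev
  set T : Finset ℕ := hS.toFinset with hTdef
  have hmem : ∀ j : ↑((↑T : Set ℕ)ᶜ), |x / xs (j : ℕ)| < 1/2 := by
    intro j
    have h2 := j.2
    simp only [Set.mem_compl_iff, Finset.coe_sort_coe, hTdef, Set.Finite.coe_toFinset,
      Set.mem_setOf_eq, not_not] at h2
    exact h2
  have hpos : ∀ j : ↑((↑T : Set ℕ)ᶜ), (0:ℝ) < 1 - x / xs (j : ℕ) := by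
    intro j
    have h := abs_lt.mp (hmem j)
    linarith [h.2]
  have hlog : Summable (fun j : ↑((↑T : Set ℕ)ᶜ) => Real.log (1 - x / xs (j : ℕ))) := by
    refine Summable.of_norm_bounded (g := fun j : ↑((↑T : Set ℕ)ᶜ) => 2 * |x / xs (j : ℕ)|)
      (((hs.mul_left 2).subtype ((↑T : Set ℕ)ᶜ)).congr fun _ => rfl) ?_
    intro j
    have h := abs_lt.mp (hmem j)
    have hp := hpos j
    have h1 : Real.log (1 - x / xs (j : ℕ)) ≤ (1 - x / xs (j : ℕ)) - 1 :=
      Real.log_le_sub_one_of_pos hp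
    have h2 : 1 - (1 - x / xs (j : ℕ))⁻¹ ≤ Real.log (1 - x / xs (j : ℕ)) :=
      Real.one_sub_inv_le_log_of_pos hp
    have hinv : (1 - x / xs (j : ℕ))⁻¹ ≤ 1 + 2 * |x / xs (j : ℕ)| := by
      rw [inv_le_iff_one_le_mul₀ hp]
      rcases abs_cases (x / xs (j : ℕ)) with hc | hc
      · nlinarith [hc.1, hc.2, h.2]
      · nlinarith [hc.1, hc.2, h.1]
    have habs : 0 ≤ |x / xs (j : ℕ)| := abs_nonneg _
    rw [Real.norm_eq_abs, abs_le]
    refine ⟨by linarith, ?_⟩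
    have h3 : (1 - x / xs (j : ℕ)) - 1 ≤ |x / xs (j : ℕ)| := by
      rcases abs_cases (x / xs (j : ℕ)) with hc | hc
      · linarith [hc.1]
      · linarith [hc.1]
    linarith
  have hPc : HasProd (fun j : ↑((↑T : Set ℕ)ᶜ) => 1 - x / xs (j : ℕ))
      (Real.exp (∑' j : ↑((↑T : Set ℕ)ᶜ), Real.log (1 - x / xs (j : ℕ)))) := by
    have h' := hlog.hasSum.rexp
    have heq : (Real.exp ∘ fun j : ↑((↑T : Set ℕ)ᶜ) => Real.log (1 - x / xs (j : ℕ)))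
        = fun j : ↑((↑T : Set ℕ)ᶜ) => 1 - x / xs (j : ℕ) :=
      funext fun j => Real.exp_log (hpos j)
    rwa [heq] at h'
  have hPfull : HasProd (fun j => 1 - x / xs j)
      ((∏ j ∈ T, (1 - x / xs j)) *
        Real.exp (∑' j : ↑((↑T : Set ℕ)ᶜ), Real.log (1 - x / xs (j : ℕ)))) :=
    (T.hasProd (fun j => 1 - x / xs j)).mul_compl hPc
  refine ⟨hPfull.multipliable, fun h0 => ?_⟩
  rw [hPfull.tprod_eq]
  exact mul_ne_zero (Finset.prod_ne_zero_iff.mpr fun j _ => h0 j) (Real.exp_pos _).ne'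

lemma aux_meas (xs : ℕ → ℝ) (hsum : Summable fun j => 1 / |xs j|) :
    Measurable (fun x : ℝ => ∏' j : ℕ, (1 - x / xs j)) := by
  apply measurable_of_tendsto_metrizable
    (f := fun n (x : ℝ) => ∏ j ∈ Finset.range n, (1 - x / xs j))
  · intro n
    exact Finset.measurable_prod _ fun j _ => measurable_const.sub (measurable_id.div_const _)
  · rw [tendsto_pi_nhds]
    intro x
    exact (aux_key xs hsum x).1.hasProd.tendsto_prod_nat

lemma aux_elp (t : ℝ → ℝ) (htm : Measurable t) (μ : Measure ℝ) (h : ℝ → ℝ) :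
    eLpNorm h 2 (μ.withDensity fun x => ENNReal.ofReal ((t x) ^ 2))
      = eLpNorm (fun x => h x * t x) 2 μ := by
  rw [eLpNorm_eq_lintegral_rpow_enorm_toReal two_ne_zero ENNReal.ofNat_ne_top,
      eLpNorm_eq_lintegral_rpow_enorm_toReal two_ne_zero ENNReal.ofNat_ne_top]
  congr 1
  rw [lintegral_withDensity_eq_lintegral_mul_non_measurable _
      ((htm.pow_const 2).ennreal_ofReal)
      (Filter.Eventually.of_forall fun x => ENNReal.ofReal_lt_top)]
  refine lintegral_congr fun x => ?_
  have h2 : ((2 : ℝ≥0∞).toReal) = (2 : ℝ) := by simp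
  rw [h2]
  have e1 : ∀ a : ℝ, (‖a‖ₑ) ^ (2:ℝ) = ENNReal.ofReal (a ^ 2) := by
    intro a
    rw [show ((2:ℝ)) = ((2:ℕ):ℝ) by norm_num, ENNReal.rpow_natCast,
        Real.enorm_eq_ofReal_abs, ← ENNReal.ofReal_pow (abs_nonneg _), sq_abs]
  simp only [Pi.mul_apply]
  rw [e1, e1, ← ENNReal.ofReal_mul (sq_nonneg _)]
  congr 1
  ring

/-- **Theorem 2.1 (M = ∞).** Let `t(x) = c xˢ ∏_{j=1}^∞ (1 - x/x_j)` be a genus-zero entire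
function, where `c ≠ 0`, the `x_j` are nonzero and `∑ 1/|x_j| < ∞`.  Let `μ` be a finite
positive measure on `ℝ` with infinite support and no mass points at the zeros of `t`.  If
polynomials are dense in `L²(μ)` and in `L²(t² dμ)`, then the linear span of
`{xⁿ t(x) : n ≥ 0}` is dense in `L²(μ)`. -/
theorem tdense_infinite
    (s : ℕ) (c : ℝ) (hc : c ≠ 0)
    (xs : ℕ → ℝ) (hxs : ∀ j, xs j ≠ 0)
    (hsum : Summable fun j => 1 / |xs j|)
    (t : ℝ → ℝ) (ht : ∀ x, t x = c * x ^ s * ∏' j : ℕ, (1 - x / xs j))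
    (μ : Measure ℝ) [IsFiniteMeasure μ]
    (hsupp : (msupport μ).Infinite)
    (hmass : ∀ z : ℝ, t z = 0 → μ {z} = 0)
    (hdense : PolyDense μ)
    (hdenseW : PolyDense (μ.withDensity fun x => ENNReal.ofReal ((t x) ^ 2))) :
    ∀ f : ℝ → ℝ, MemLp f 2 μ → ∀ ε : ℝ, 0 < ε →
      ∃ p : Polynomial ℝ,
        eLpNorm (fun x => f x - p.eval x * t x) 2 μ < ENNReal.ofReal ε := by
  intro f hf ε hε
  -- measurability of t
  have htm : Measurable t := by
    have : t = fun x => c * x ^ s * ∏' j : ℕ, (1 - x / xs j) := funext ht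
    rw [this]
    exact (measurable_const.mul (measurable_id.pow_const s)).mul (aux_meas xs hsum)
  -- the zero set of t is null
  set Z : Set ℝ := {z : ℝ | t z = 0} with hZdef
  have hZsub : Z ⊆ insert (0:ℝ) (Set.range xs) := by
    intro z hz
    by_contra hzn
    simp only [Set.mem_insert_iff, Set.mem_range, not_or, not_exists] at hzn
    obtain ⟨hz0, hzr⟩ := hzn
    have h0 : ∀ j, 1 - z / xs j ≠ 0 := by
      intro j hj
      have : z / xs j = 1 := by linarith [sub_eq_zero.mp hj]
      exact hzr j ((div_eq_one_iff_eq (hxs j)).mp this).symm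
    have hP := (aux_key xs hsum z).2 h0
    have : t z ≠ 0 := by
      rw [ht z]
      exact mul_ne_zero (mul_ne_zero hc (pow_ne_zero s hz0)) hP
    exact this hz
  have hZnull : μ Z = 0 := by
    have hZc : Z.Countable := ((Set.countable_range xs).insert 0).mono hZsub
    have : Z = ⋃ z ∈ Z, {z} := by simp
    rw [this]
    exact (measure_biUnion_null_iff hZc).mpr fun z hz => hmass z hz
  have htne : ∀ᵐ x ∂μ, t x ≠ 0 := by
    rw [ae_iff]
    simpa using hZnull
  -- measurable representative of f
  have hfa := hf.aestronglyMeasurable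
  set f' : ℝ → ℝ := hfa.mk f with hf'def
  have hff' : f =ᵐ[μ] f' := hfa.ae_eq_mk
  have hf'm : Measurable f' := hfa.stronglyMeasurable_mk.measurable
  have hf'L : MemLp f' 2 μ := hf.ae_eq hff'
  -- the quotient g = f'/t
  set g : ℝ → ℝ := fun x => f' x / t x with hgdef
  have hgm : Measurable g := hf'm.div htm
  have hgt : (fun x => g x * t x) =ᵐ[μ] f' := by
    filter_upwards [htne] with x hx
    simp [hgdef, div_mul_cancel₀ _ hx]
  have hgL : MemLp g 2 (μ.withDensity fun x => ENNReal.ofReal ((t x) ^ 2)) := by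
    refine ⟨hgm.aestronglyMeasurable, ?_⟩
    rw [aux_elp t htm μ g, eLpNorm_congr_ae hgt]
    exact hf'L.2
  obtain ⟨p, hp⟩ := hdenseW g hgL ε hε
  refine ⟨p, ?_⟩
  have e1 : eLpNorm (fun x => f x - p.eval x * t x) 2 μ
      = eLpNorm (fun x => (g x - p.eval x) * t x) 2 μ := by
    refine eLpNorm_congr_ae ?_
    filter_upwards [hff', hgt] with x hx1 hx2
    rw [sub_mul, hx2, hx1]
  rw [e1, ← aux_elp t htm μ (fun x => g x - p.eval x)]
  exact hp
end
end
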